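/- arXiv:2201.06576 — 2 statements merged into one kernel-verified Lean document; each statement's English description precedes it below -/
import Mathlib

section
/- Let μ be any probability measure on ℕ = {1,2,…} (no tail or aperiodicity assumption required), and let ∼ be the random equivalence relation generated by the associated coalescing renewal processes. Then for all i, j, k, ℓ ∈ ℤ, Cov[1_{{i∼j}}, 1_{{k∼ℓ}}] ≤ P(i ∼ j ∼ k ∼ ℓ). -/
open MeasureTheory ProbabilityTheory Filter Finset
open scoped ENNReal NNReal Topology Classical

noncomputable section

/-- A function `L` is slowly varying (at infinity) on `(0,∞)`:
it is positive there and `L(cx)/L(x) → 1` for every `c > 0`. -/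
def IsSlowlyVarying (L : ℝ → ℝ) : Prop :=
  (∀ x : ℝ, 0 < x → 0 < L x) ∧
    ∀ c : ℝ, 0 < c → Tendsto (fun x : ℝ => L (c * x) / L x) atTop (𝓝 1)

/-- `f(n) ~ g(n)` as `n → ∞`, i.e. `f n / g n → 1`. -/
def SeqAsymp (f g : ℕ → ℝ) : Prop := Tendsto (fun n => f n / g n) atTop (𝓝 1)

variable {Ω : Type} [MeasurableSpace Ω]

/-- Parent map of the Hammond–Sheffield random graph: the parent of `i` is `i - R i`. -/
def par (R : ℤ → Ω → ℕ) (ω : Ω) (i : ℤ) : ℤ := i - (R i ω : ℤ)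

/-- `i` and `j` lie in the same connected component of the random graph `G_μ`:
their ancestral lineages (iterates of the parent map) meet. -/
def rel (R : ℤ → Ω → ℕ) (ω : Ω) (i j : ℤ) : Prop :=
  ∃ m n : ℕ, (par R ω)^[m] i = (par R ω)^[n] j

/-- The renewal mass `q_n`: the probability that the ancestral lineage of `n`
passes through `0`; equivalently `P(∃ j ≥ 0, R̃₁ + ⋯ + R̃ⱼ = n)`. -/
def qrenew (P : Measure Ω) (R : ℤ → Ω → ℕ) (n : ℕ) : ℝ :=
  (P {ω | ∃ k : ℕ, (par R ω)^[k] (n : ℤ) = 0}).toReal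

/-- Standing assumptions on the step distribution `μ`: a probability measure on
`ℕ = {1,2,…}` with regularly varying tails `μ[n,∞) ~ n^{-α} L(n)` where `0 < α < 1/2`
and `L` slowly varying, and aperiodic (gcd of the support is `1`). -/
structure HSmu (μ : Measure ℕ) (α : ℝ) (L : ℝ → ℝ) : Prop where
  prob : IsProbabilityMeasure μ
  zero : μ {0} = 0
  alpha_pos : (0:ℝ) < α
  alpha_lt : α < 1/2
  slowly : IsSlowlyVarying L
  tail : Tendsto (fun n : ℕ => (μ {m : ℕ | n ≤ m}).toReal / ((n : ℝ) ^ (-α) * L n))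
      atTop (𝓝 1)
  aperiodic : ∀ d : ℕ, (∀ n : ℕ, μ {n} ≠ 0 → d ∣ n) → d = 1

/-- Standing assumptions on the random environment: `P` is a probability measure and
`(R i)_{i ∈ ℤ}` are i.i.d. with law `μ`. -/
structure HSgraph (P : Measure Ω) (μ : Measure ℕ) (R : ℤ → Ω → ℕ) : Prop where
  prob : IsProbabilityMeasure P
  meas : ∀ i, Measurable (R i)
  indep : iIndepFun R P
  law : ∀ i, Measure.map (R i) P = μ

/-- The strong renewal condition: `q_n ~ n^{α-1}/(Γ(α)Γ(1-α)L(n))`. -/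
def SRT (P : Measure Ω) (R : ℤ → Ω → ℕ) (α : ℝ) (L : ℝ → ℝ) : Prop :=
  SeqAsymp (qrenew P R)
    (fun n => (n : ℝ) ^ (α - 1) / (Real.Gamma α * Real.Gamma (1 - α) * L n))

/-- The constant `C_α = (Σ_{m≥0} q_m²)⁻¹ Γ(1-2α)/(Γ(α)Γ(1-α)³)`. -/
def Calpha (P : Measure Ω) (R : ℤ → Ω → ℕ) (α : ℝ) : ℝ :=
  (∑' m : ℕ, (qrenew P R m)^2)⁻¹ *
    (Real.Gamma (1 - 2*α) / (Real.Gamma α * Real.Gamma (1 - α)^3))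

namespace HScov

/-- Environment-level parent map. -/
def parE (e : ℤ → ℕ) (v : ℤ) : ℤ := v - (e v : ℤ)

lemma rel_symm {R : ℤ → Ω → ℕ} {ω : Ω} {a b : ℤ} (h : rel R ω a b) : rel R ω b a := by
  obtain ⟨m, n, h⟩ := h; exact ⟨n, m, h.symm⟩

lemma rel_trans {R : ℤ → Ω → ℕ} {ω : Ω} {a b c : ℤ}
    (h1 : rel R ω a b) (h2 : rel R ω b c) : rel R ω a c := by
  obtain ⟨m, n, h1⟩ := h1
  obtain ⟨s, t, h2⟩ := h2
  refine ⟨s + m, n + t, ?_⟩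
  calc (par R ω)^[s + m] a = (par R ω)^[s] ((par R ω)^[m] a) :=
        Function.iterate_add_apply _ s m a
    _ = (par R ω)^[s] ((par R ω)^[n] b) := by rw [h1]
    _ = (par R ω)^[s + n] b := (Function.iterate_add_apply _ s n b).symm
    _ = (par R ω)^[n + s] b := by rw [add_comm]
    _ = (par R ω)^[n] ((par R ω)^[s] b) := Function.iterate_add_apply _ n s b
    _ = (par R ω)^[n] ((par R ω)^[t] c) := by rw [h2]
    _ = (par R ω)^[n + t] c := (Function.iterate_add_apply _ n t c).symm

/-- If two environments agree off `W` and the lineage of `v` under `e` avoids `W`,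
then the lineages of `v` under the two environments coincide. -/
lemma iterate_congr {e e' : ℤ → ℕ} {W : Set ℤ} (he : ∀ v, v ∉ W → e v = e' v)
    {v : ℤ} (hv : ∀ n : ℕ, (parE e)^[n] v ∉ W) : ∀ n : ℕ, (parE e')^[n] v = (parE e)^[n] v := by
  intro n
  induction n with
  | zero => rfl
  | succ n ih =>
    rw [Function.iterate_succ_apply', Function.iterate_succ_apply', ih]
    show (parE e)^[n] v - (e' ((parE e)^[n] v) : ℤ) = (parE e)^[n] v - (e ((parE e)^[n] v) : ℤ)
    rw [he _ (hv n)]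

lemma measurable_iterate {X : Type} [MeasurableSpace X] (F : ℤ → X → ℕ)
    (hF : ∀ v, Measurable (F v)) (v : ℤ) (n : ℕ) :
    Measurable fun x => (parE (fun u => F u x))^[n] v := by
  induction n with
  | zero => simpa using measurable_const
  | succ n ih =>
    have hrw : (fun x => (parE (fun u => F u x))^[n+1] v)
        = fun x => (parE (fun u => F u x))^[n] v - (F ((parE (fun u => F u x))^[n] v) x : ℤ) := by
      funext x
      rw [Function.iterate_succ_apply']
      rfl
    rw [hrw]
    apply measurable_to_countable'
    intro z
    have hset : (fun x => (parE (fun u => F u x))^[n] v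
          - (F ((parE (fun u => F u x))^[n] v) x : ℤ)) ⁻¹' {z}
        = ⋃ a : ℤ, ((fun x => (parE (fun u => F u x))^[n] v) ⁻¹' {a})
            ∩ (F a ⁻¹' {m : ℕ | (m : ℤ) = a - z}) := by
      ext x
      simp only [Set.mem_preimage, Set.mem_singleton_iff, Set.mem_iUnion, Set.mem_inter_iff,
        Set.mem_setOf_eq]
      constructor
      · intro h; exact ⟨_, rfl, by omega⟩
      · rintro ⟨a, ha, hb⟩; rw [ha]; omega
    rw [hset]
    exact MeasurableSet.iUnion fun a =>
      (ih (measurableSet_singleton a)).inter ((hF a) MeasurableSpace.measurableSet_top)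

/-- The deterministic path started at `start` driven by the step sequence `c`. -/
def path (N : ℕ) (c : Fin N → ℕ) (start : ℤ) : ℕ → ℤ
  | 0 => start
  | t + 1 => path N c start t - (if h : t < N then (c ⟨t, h⟩ : ℤ) else 0)

lemma path_succ (N : ℕ) (c : Fin N → ℕ) (start : ℤ) (t : ℕ) (ht : t < N) :
    path N c start (t + 1) = path N c start t - (c ⟨t, ht⟩ : ℤ) := by
  simp [path, ht]

lemma path_spec (R : ℤ → Ω → ℕ) (N : ℕ) (start : ℤ) (ω : Ω) :
    ∀ t, t ≤ N →
      path N (fun u => R ((par R ω)^[(u : ℕ)] start) ω) start t = (par R ω)^[t] start := by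
  intro t
  induction t with
  | zero => intro _; rfl
  | succ t ih =>
    intro h
    have ht : t < N := h
    rw [path_succ N _ start t ht, ih ht.le, Function.iterate_succ_apply']
    rfl

lemma path_eq (R : ℤ → Ω → ℕ) (N : ℕ) (c : Fin N → ℕ) (start : ℤ) (ω : Ω)
    (hc : ∀ t (h : t < N), R (path N c start t) ω = c ⟨t, h⟩) :
    ∀ t, t ≤ N → (par R ω)^[t] start = path N c start t := by
  intro t
  induction t with
  | zero => intro _; rfl
  | succ t ih =>
    intro h
    have ht : t < N := h
    rw [Function.iterate_succ_apply', ih ht.le, path_succ N c start t ht, ← hc t ht]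
    rfl

/-- The cylinder event prescribing the first `N` steps of the lineages of `k` and `l`. -/
def Cset (R : ℤ → Ω → ℕ) (N : ℕ) (k l : ℤ) (cd : (Fin N → ℕ) × (Fin N → ℕ)) : Set Ω :=
  {ω | ∀ t, ∀ h : t < N,
    R (path N cd.1 k t) ω = cd.1 ⟨t, h⟩ ∧ R (path N cd.2 l t) ω = cd.2 ⟨t, h⟩}

/-- The set of sites visited by the prescribed paths. -/
def Wset (N : ℕ) (k l : ℤ) (cd : (Fin N → ℕ) × (Fin N → ℕ)) : Set ℤ :=
  {v | ∃ t, t < N ∧ (v = path N cd.1 k t ∨ v = path N cd.2 l t)}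

/-- The event that `i ∼ j` with both lineages avoiding the prescribed path sites. -/
def Eset (R : ℤ → Ω → ℕ) (N : ℕ) (i j k l : ℤ) (cd : (Fin N → ℕ) × (Fin N → ℕ)) : Set Ω :=
  {ω | rel R ω i j ∧
    ∀ s : ℕ, (par R ω)^[s] i ∉ Wset N k l cd ∧ (par R ω)^[s] j ∉ Wset N k l cd}

lemma Cset_mem (R : ℤ → Ω → ℕ) (N : ℕ) (k l : ℤ) (cd : (Fin N → ℕ) × (Fin N → ℕ)) :
    MeasurableSet[⨆ v ∈ Wset N k l cd, MeasurableSpace.comap (R v) inferInstance]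
      (Cset R N k l cd) := by
  have hdef : Cset R N k l cd = ⋂ (t : ℕ) (h : t < N),
      ({ω | R (path N cd.1 k t) ω = cd.1 ⟨t, h⟩} ∩ {ω | R (path N cd.2 l t) ω = cd.2 ⟨t, h⟩}) := by
    ext ω
    constructor
    · intro h
      exact Set.mem_iInter.2 fun t => Set.mem_iInter.2 fun ht => ⟨(h t ht).1, (h t ht).2⟩
    · intro h t ht
      have := Set.mem_iInter.1 (Set.mem_iInter.1 h t) ht
      exact ⟨this.1, this.2⟩
  rw [hdef]
  refine MeasurableSet.iInter fun t => MeasurableSet.iInter fun ht => MeasurableSet.inter ?_ ?_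
  · refine le_biSup (fun v => MeasurableSpace.comap (R v) inferInstance)
      (show path N cd.1 k t ∈ Wset N k l cd from ⟨t, ht, Or.inl rfl⟩) _ ?_
    exact ⟨{cd.1 ⟨t, ht⟩}, MeasurableSpace.measurableSet_top, rfl⟩
  · refine le_biSup (fun v => MeasurableSpace.comap (R v) inferInstance)
      (show path N cd.2 l t ∈ Wset N k l cd from ⟨t, ht, Or.inr rfl⟩) _ ?_
    exact ⟨{cd.2 ⟨t, ht⟩}, MeasurableSpace.measurableSet_top, rfl⟩

lemma Eset_mem (R : ℤ → Ω → ℕ) (N : ℕ) (i j k l : ℤ) (cd : (Fin N → ℕ) × (Fin N → ℕ)) :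
    MeasurableSet[⨆ v ∈ (Wset N k l cd)ᶜ, MeasurableSpace.comap (R v) inferInstance]
      (Eset R N i j k l cd) := by
  classical
  set W : Set ℤ := Wset N k l cd with hW
  set M2 : MeasurableSpace Ω := ⨆ v ∈ Wᶜ, MeasurableSpace.comap (R v) inferInstance with hM2
  let g : Ω → (↥Wᶜ → ℕ) := fun ω v => R ↑v ω
  have hg : Measurable[M2] g := by
    apply measurable_pi_lambda
    intro v
    apply Measurable.of_comap_le
    exact le_biSup (fun v => MeasurableSpace.comap (R v) inferInstance) v.2
  let ext : (↥Wᶜ → ℕ) → ℤ → ℕ := fun x v => if h : v ∈ Wᶜ then x ⟨v, h⟩ else 0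
  let L : ℤ → ℕ → (↥Wᶜ → ℕ) → ℤ := fun v n x => (parE (fun u => ext x u))^[n] v
  have hL : ∀ v n, Measurable (L v n) := by
    intro v n
    apply measurable_iterate (F := fun u x => ext x u)
    intro u
    by_cases hu : u ∈ Wᶜ
    · have he : (fun x : ↥Wᶜ → ℕ => ext x u) = fun x => x ⟨u, hu⟩ := by
        funext x
        show (if h : u ∈ Wᶜ then x ⟨u, h⟩ else 0) = x ⟨u, hu⟩
        rw [dif_pos hu]
      show Measurable fun x : ↥Wᶜ → ℕ => ext x u
      rw [he]
      exact measurable_pi_apply _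
    · have he : (fun x : ↥Wᶜ → ℕ => ext x u) = fun _ => 0 := by
        funext x
        show (if h : u ∈ Wᶜ then x ⟨u, h⟩ else 0) = 0
        rw [dif_neg hu]
      show Measurable fun x : ↥Wᶜ → ℕ => ext x u
      rw [he]
      exact measurable_const
  let S : Set (↥Wᶜ → ℕ) :=
    {x | (∃ m n : ℕ, L i m x = L j n x) ∧ ∀ s : ℕ, L i s x ∉ W ∧ L j s x ∉ W}
  have hS : MeasurableSet S := by
    have h1 : MeasurableSet {x : ↥Wᶜ → ℕ | ∃ m n : ℕ, L i m x = L j n x} := by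
      have : {x : ↥Wᶜ → ℕ | ∃ m n : ℕ, L i m x = L j n x}
          = ⋃ (m : ℕ) (n : ℕ), {x | L i m x = L j n x} := by
        ext x; simp
      rw [this]
      exact MeasurableSet.iUnion fun m => MeasurableSet.iUnion fun n =>
        measurableSet_eq_fun (hL i m) (hL j n)
    have h2 : MeasurableSet {x : ↥Wᶜ → ℕ | ∀ s : ℕ, L i s x ∉ W ∧ L j s x ∉ W} := by
      have : {x : ↥Wᶜ → ℕ | ∀ s : ℕ, L i s x ∉ W ∧ L j s x ∉ W}
          = ⋂ s : ℕ, ((L i s ⁻¹' W)ᶜ ∩ (L j s ⁻¹' W)ᶜ) := by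
        ext x; simp [Set.mem_iInter]
      rw [this]
      exact MeasurableSet.iInter fun s =>
        ((hL i s MeasurableSpace.measurableSet_top).compl).inter
          ((hL j s MeasurableSpace.measurableSet_top).compl)
    exact h1.inter h2
  have hgS : Eset R N i j k l cd = g ⁻¹' S := by
    ext ω
    constructor
    · rintro ⟨⟨m, n, hmn⟩, havoid⟩
      have hagree : ∀ v, v ∉ W → (fun u => R u ω) v = ext (g ω) v := by
        intro v hv
        simp [ext, g, hv]
      have ki : ∀ s, (parE (ext (g ω)))^[s] i = (parE (fun u => R u ω))^[s] i :=
        iterate_congr hagree (fun s => (havoid s).1)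
      have kj : ∀ s, (parE (ext (g ω)))^[s] j = (parE (fun u => R u ω))^[s] j :=
        iterate_congr hagree (fun s => (havoid s).2)
      refine ⟨⟨m, n, ?_⟩, fun s => ⟨?_, ?_⟩⟩
      · show (parE (fun u => ext (g ω) u))^[m] i = (parE (fun u => ext (g ω) u))^[n] j
        rw [show (fun u => ext (g ω) u) = ext (g ω) from rfl, ki m, kj n]
        exact hmn
      · show (parE (fun u => ext (g ω) u))^[s] i ∉ W
        rw [show (fun u => ext (g ω) u) = ext (g ω) from rfl, ki s]
        exact (havoid s).1
      · show (parE (fun u => ext (g ω) u))^[s] j ∉ W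
        rw [show (fun u => ext (g ω) u) = ext (g ω) from rfl, kj s]
        exact (havoid s).2
    · rintro ⟨⟨m, n, hmn⟩, havoid⟩
      have hagree : ∀ v, v ∉ W → ext (g ω) v = (fun u => R u ω) v := by
        intro v hv
        simp [ext, g, hv]
      have ki : ∀ s, (parE (fun u => R u ω))^[s] i = (parE (ext (g ω)))^[s] i :=
        iterate_congr hagree (fun s => (havoid s).1)
      have kj : ∀ s, (parE (fun u => R u ω))^[s] j = (parE (ext (g ω)))^[s] j :=
        iterate_congr hagree (fun s => (havoid s).2)
      refine ⟨⟨m, n, ?_⟩, fun s => ⟨?_, ?_⟩⟩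
      · show (parE (fun u => R u ω))^[m] i = (parE (fun u => R u ω))^[n] j
        rw [ki m, kj n]
        exact hmn
      · show (parE (fun u => R u ω))^[s] i ∉ W
        rw [ki s]
        exact (havoid s).1
      · show (parE (fun u => R u ω))^[s] j ∉ W
        rw [kj s]
        exact (havoid s).2
  rw [hgS]
  exact hg hS

/-- Core probabilistic estimate: `P(i∼j, k∼l, j≁k) ≤ P(i∼j)·P(k∼l)`. -/
lemma core_bound (P : Measure Ω) (R : ℤ → Ω → ℕ)
    (hmeas : ∀ v, Measurable (R v))
    (hindep : iIndepFun R P)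
    (i j k l : ℤ) :
    P {ω | rel R ω i j ∧ rel R ω k l ∧ ¬ rel R ω j k}
      ≤ P {ω | rel R ω i j} * P {ω | rel R ω k l} := by
  classical
  have hcover : {ω : Ω | rel R ω i j ∧ rel R ω k l ∧ ¬ rel R ω j k}
      = ⋃ N : ℕ, {ω : Ω | rel R ω i j ∧
          (∃ m ≤ N, ∃ n ≤ N, (par R ω)^[m] k = (par R ω)^[n] l) ∧ ¬ rel R ω j k} := by
    ext ω
    simp only [Set.mem_setOf_eq, Set.mem_iUnion]
    constructor
    · rintro ⟨h1, ⟨m, n, h2⟩, h3⟩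
      exact ⟨max m n, h1, ⟨m, le_max_left _ _, n, le_max_right _ _, h2⟩, h3⟩
    · rintro ⟨N, h1, ⟨m, _, n, _, h2⟩, h3⟩
      exact ⟨h1, ⟨m, n, h2⟩, h3⟩
  have hmono : Monotone (fun N : ℕ => {ω : Ω | rel R ω i j ∧
      (∃ m ≤ N, ∃ n ≤ N, (par R ω)^[m] k = (par R ω)^[n] l) ∧ ¬ rel R ω j k}) := by
    intro N M hNM ω hω
    obtain ⟨h1, ⟨m, hm, n, hn, h2⟩, h3⟩ := hω
    exact ⟨h1, ⟨m, hm.trans hNM, n, hn.trans hNM, h2⟩, h3⟩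
  rw [hcover, hmono.directed_le.measure_iUnion]
  refine iSup_le fun N => ?_
  -- the per-`N` bound
  set Good : Set ((Fin N → ℕ) × (Fin N → ℕ)) :=
    {cd | ∃ m ≤ N, ∃ n ≤ N, path N cd.1 k m = path N cd.2 l n} with hGoodDef
  -- covering by cylinders
  have hsub : {ω : Ω | rel R ω i j ∧
        (∃ m ≤ N, ∃ n ≤ N, (par R ω)^[m] k = (par R ω)^[n] l) ∧ ¬ rel R ω j k}
      ⊆ ⋃ cd : ↥Good, Cset R N k l ↑cd ∩ Eset R N i j k l ↑cd := by
    rintro ω ⟨h1, ⟨m, hm, n, hn, h2⟩, h3⟩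
    set c : Fin N → ℕ := fun u => R ((par R ω)^[(u : ℕ)] k) ω with hc
    set d : Fin N → ℕ := fun u => R ((par R ω)^[(u : ℕ)] l) ω with hd
    have hpk : ∀ t, t ≤ N → path N c k t = (par R ω)^[t] k := path_spec R N k ω
    have hpl : ∀ t, t ≤ N → path N d l t = (par R ω)^[t] l := path_spec R N l ω
    have hGood : (c, d) ∈ Good := ⟨m, hm, n, hn, by rw [hpk m hm, hpl n hn]; exact h2⟩
    have hCm : ω ∈ Cset R N k l (c, d) := by
      intro t ht
      constructor
      · rw [show path N (c, d).1 k t = (par R ω)^[t] k from hpk t ht.le]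
      · rw [show path N (c, d).2 l t = (par R ω)^[t] l from hpl t ht.le]
    have hrelkl : rel R ω k l := ⟨m, n, h2⟩
    have hEm : ω ∈ Eset R N i j k l (c, d) := by
      refine ⟨h1, fun s => ⟨?_, ?_⟩⟩
      · rintro ⟨t, ht, hor⟩
        cases hor with
        | inl hh =>
          have hik : rel R ω i k := ⟨s, t, by rw [hh]; exact hpk t ht.le⟩
          exact h3 (rel_trans (rel_symm h1) hik)
        | inr hh =>
          have hil : rel R ω i l := ⟨s, t, by rw [hh]; exact hpl t ht.le⟩
          exact h3 (rel_trans (rel_symm h1) (rel_trans hil (rel_symm hrelkl)))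
      · rintro ⟨t, ht, hor⟩
        cases hor with
        | inl hh =>
          exact h3 ⟨s, t, by rw [hh]; exact hpk t ht.le⟩
        | inr hh =>
          exact h3 (rel_trans ⟨s, t, by rw [hh]; exact hpl t ht.le⟩ (rel_symm hrelkl))
    exact Set.mem_iUnion.2 ⟨⟨(c, d), hGood⟩, hCm, hEm⟩
  -- disjointness of the cylinders
  have hCdisj : Pairwise (Function.onFun Disjoint fun cd : ↥Good => Cset R N k l ↑cd) := by
    rintro ⟨cd, hcd⟩ ⟨cd', hcd'⟩ hne
    have hne' : cd ≠ cd' := fun h => hne (Subtype.ext h)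
    rw [Function.onFun, Set.disjoint_left]
    rintro ω hω hω'
    apply hne'
    have h1 : ∀ t, t ≤ N → (par R ω)^[t] k = path N cd.1 k t :=
      path_eq R N cd.1 k ω (fun t ht => (hω t ht).1)
    have h1' : ∀ t, t ≤ N → (par R ω)^[t] k = path N cd'.1 k t :=
      path_eq R N cd'.1 k ω (fun t ht => (hω' t ht).1)
    have h2 : ∀ t, t ≤ N → (par R ω)^[t] l = path N cd.2 l t :=
      path_eq R N cd.2 l ω (fun t ht => (hω t ht).2)
    have h2' : ∀ t, t ≤ N → (par R ω)^[t] l = path N cd'.2 l t :=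
      path_eq R N cd'.2 l ω (fun t ht => (hω' t ht).2)
    have e1 : cd.1 = cd'.1 := by
      funext u
      have a1 : R (path N cd.1 k (u : ℕ)) ω = cd.1 u := by
        have := (hω (u : ℕ) u.isLt).1; rwa [Fin.eta] at this
      have a1' : R (path N cd'.1 k (u : ℕ)) ω = cd'.1 u := by
        have := (hω' (u : ℕ) u.isLt).1; rwa [Fin.eta] at this
      rw [← a1, ← a1', ← h1 _ u.isLt.le, ← h1' _ u.isLt.le]
    have e2 : cd.2 = cd'.2 := by
      funext u
      have a2 : R (path N cd.2 l (u : ℕ)) ω = cd.2 u := by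
        have := (hω (u : ℕ) u.isLt).2; rwa [Fin.eta] at this
      have a2' : R (path N cd'.2 l (u : ℕ)) ω = cd'.2 u := by
        have := (hω' (u : ℕ) u.isLt).2; rwa [Fin.eta] at this
      rw [← a2, ← a2', ← h2 _ u.isLt.le, ← h2' _ u.isLt.le]
    exact Prod.ext e1 e2
  -- measurability of the cylinders
  have hM1le : ∀ cd : (Fin N → ℕ) × (Fin N → ℕ),
      (⨆ v ∈ Wset N k l cd, MeasurableSpace.comap (R v) inferInstance) ≤ ‹MeasurableSpace Ω› :=
    fun cd => iSup₂_le fun v _ => (hmeas v).comap_le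
  have hCmeas : ∀ cd, MeasurableSet (Cset R N k l cd) :=
    fun cd => hM1le cd _ (Cset_mem R N k l cd)
  -- independence and the product identity
  have hprod : ∀ cd, P (Cset R N k l cd ∩ Eset R N i j k l cd)
      = P (Cset R N k l cd) * P (Eset R N i j k l cd) := by
    intro cd
    have hIndep : Indep (⨆ v ∈ Wset N k l cd, MeasurableSpace.comap (R v) inferInstance)
        (⨆ v ∈ (Wset N k l cd)ᶜ, MeasurableSpace.comap (R v) inferInstance) P :=
      indep_biSup_compl (fun v => (hmeas v).comap_le) hindep _
    exact (Indep_iff _ _ _).1 hIndep _ _ (Cset_mem R N k l cd) (Eset_mem R N i j k l cd)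
  have hEA : ∀ cd, Eset R N i j k l cd ⊆ {ω : Ω | rel R ω i j} := fun cd ω hω => hω.1
  have hCB : ∀ cd : ↥Good, Cset R N k l ↑cd ⊆ {ω : Ω | rel R ω k l} := by
    rintro ⟨cd, m, hm, n, hn, hmn⟩ ω hω
    refine ⟨m, n, ?_⟩
    rw [path_eq R N cd.1 k ω (fun t ht => (hω t ht).1) m hm,
        path_eq R N cd.2 l ω (fun t ht => (hω t ht).2) n hn]
    exact hmn
  calc P {ω : Ω | rel R ω i j ∧
        (∃ m ≤ N, ∃ n ≤ N, (par R ω)^[m] k = (par R ω)^[n] l) ∧ ¬ rel R ω j k}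
      ≤ P (⋃ cd : ↥Good, Cset R N k l ↑cd ∩ Eset R N i j k l ↑cd) := measure_mono hsub
    _ ≤ ∑' cd : ↥Good, P (Cset R N k l ↑cd ∩ Eset R N i j k l ↑cd) := measure_iUnion_le _
    _ = ∑' cd : ↥Good, P (Cset R N k l ↑cd) * P (Eset R N i j k l ↑cd) :=
        tsum_congr fun cd => hprod ↑cd
    _ ≤ ∑' cd : ↥Good, P (Cset R N k l ↑cd) * P {ω : Ω | rel R ω i j} :=
        ENNReal.tsum_le_tsum fun cd => mul_le_mul_right (measure_mono (hEA ↑cd)) _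
    _ = (∑' cd : ↥Good, P (Cset R N k l ↑cd)) * P {ω : Ω | rel R ω i j} :=
        ENNReal.tsum_mul_right
    _ = P (⋃ cd : ↥Good, Cset R N k l ↑cd) * P {ω : Ω | rel R ω i j} := by
        rw [measure_iUnion hCdisj (fun cd => hCmeas ↑cd)]
    _ ≤ P {ω : Ω | rel R ω k l} * P {ω : Ω | rel R ω i j} :=
        mul_le_mul_left (measure_mono (Set.iUnion_subset hCB)) _
    _ = P {ω : Ω | rel R ω i j} * P {ω : Ω | rel R ω k l} := mul_comm _ _

end HScov

/-- **Lemma (covariance estimate).** For any probability measure `μ` on `ℕ = {1,2,…}` and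
the random equivalence relation `∼` generated by the coalescing renewal processes,
`Cov[1_{i∼j}, 1_{k∼ℓ}] = P(i∼j, k∼ℓ) - P(i∼j)P(k∼ℓ) ≤ P(i∼j∼k∼ℓ)` for all `i,j,k,ℓ ∈ ℤ`. -/
theorem covariance_indicator_le
    {Ω : Type} [MeasurableSpace Ω] (P : Measure Ω) (μ : Measure ℕ)
    (R : ℤ → Ω → ℕ)
    (hP : IsProbabilityMeasure P) (hμprob : IsProbabilityMeasure μ) (hμ0 : μ {0} = 0)
    (hmeas : ∀ i, Measurable (R i))
    (hindep : iIndepFun R P)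
    (hlaw : ∀ i, Measure.map (R i) P = μ)
    (i j k l : ℤ) :
    (P {ω | rel R ω i j ∧ rel R ω k l}).toReal -
        (P {ω | rel R ω i j}).toReal * (P {ω | rel R ω k l}).toReal
      ≤ (P {ω | rel R ω i j ∧ rel R ω j k ∧ rel R ω k l}).toReal := by
  classical
  haveI := hP
  have hAB : {ω : Ω | rel R ω i j ∧ rel R ω k l}
      ⊆ {ω : Ω | rel R ω i j ∧ rel R ω j k ∧ rel R ω k l}
        ∪ {ω : Ω | rel R ω i j ∧ rel R ω k l ∧ ¬ rel R ω j k} := by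
    rintro ω ⟨h1, h2⟩
    by_cases h3 : rel R ω j k
    · exact Or.inl ⟨h1, h3, h2⟩
    · exact Or.inr ⟨h1, h2, h3⟩
  have key : P {ω | rel R ω i j ∧ rel R ω k l}
      ≤ P {ω | rel R ω i j ∧ rel R ω j k ∧ rel R ω k l}
        + P {ω | rel R ω i j} * P {ω | rel R ω k l} :=
    le_trans (measure_mono hAB) (le_trans (measure_union_le _ _)
      (add_le_add_right (HScov.core_bound P R hmeas hindep i j k l) _))
  have hne1 : P {ω | rel R ω i j ∧ rel R ω j k ∧ rel R ω k l} ≠ ⊤ := measure_ne_top _ _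
  have hne2 : P {ω | rel R ω i j} * P {ω | rel R ω k l} ≠ ⊤ :=
    ENNReal.mul_ne_top (measure_ne_top _ _) (measure_ne_top _ _)
  have htr := ENNReal.toReal_mono (ENNReal.add_ne_top.2 ⟨hne1, hne2⟩) key
  rw [ENNReal.toReal_add hne1 hne2, ENNReal.toReal_mul] at htr
  linarith

end
end

section
/- Let μ be any probability measure on ℕ = {1,2,…}, and let ∼ be the random equivalence relation generated by the associated coalescing renewal processes. Then for pairwise distinct i, j, k, ℓ ∈ ℤ, P( i ∼ k, j ∼ ℓ, and the component containing i and k is distinct from the component containing j and ℓ ) ≤ P(i ∼ k) · P(j ∼ ℓ). -/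
open MeasureTheory ProbabilityTheory Filter Finset
open scoped ENNReal NNReal Topology Classical

noncomputable section

variable {Ω : Type} [MeasurableSpace Ω]

set_option linter.unusedSectionVars false
set_option linter.unusedVariables false

namespace HSaux


lemma rel_symm {R : ℤ → Ω → ℕ} {ω : Ω} {x y : ℤ} (h : rel R ω x y) : rel R ω y x := by
  obtain ⟨m, n, h⟩ := h; exact ⟨n, m, h.symm⟩

lemma rel_trans {R : ℤ → Ω → ℕ} {ω : Ω} {x y z : ℤ} (h1 : rel R ω x y)
    (h2 : rel R ω y z) : rel R ω x z := by
  obtain ⟨a, b, h1⟩ := h1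
  obtain ⟨c, d, h2⟩ := h2
  refine ⟨c + a, b + d, ?_⟩
  rw [Function.iterate_add_apply, h1, ← Function.iterate_add_apply, add_comm c b,
    Function.iterate_add_apply, h2, ← Function.iterate_add_apply]

/-- The event that a given finite list is an initial segment of the lineage of its head. -/
def Ev (R : ℤ → Ω → ℕ) (xs : List ℤ) : Set Ω :=
  {ω | xs.Chain' (fun u v => (R u ω : ℤ) = u - v)}

def GoodEnv (R : ℤ → Ω → ℕ) : Set Ω := {ω | ∀ v : ℤ, 1 ≤ R v ω}

structure Adm (i k : ℤ) (γ : List ℤ × List ℤ) : Prop where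
  ne1 : γ.1 ≠ []
  ne2 : γ.2 ≠ []
  hd1 : γ.1.head? = some i
  hd2 : γ.2.head? = some k
  hlast : γ.1.getLast? = γ.2.getLast?
  disj : ∀ v, v ∈ γ.1.dropLast → v ∉ γ.2.dropLast

def Fset (γ : List ℤ × List ℤ) : Set ℤ := {v | v ∈ γ.1.dropLast ∨ v ∈ γ.2.dropLast}

def Wgood (j l : ℤ) (γ δ : List ℤ × List ℤ) : Prop :=
  δ.1 ≠ [] ∧ δ.2 ≠ [] ∧ δ.1.head? = some j ∧ δ.2.head? = some l ∧
    δ.1.getLast? = δ.2.getLast? ∧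
    (∀ v ∈ δ.1.dropLast, v ∉ Fset γ) ∧ (∀ v ∈ δ.2.dropLast, v ∉ Fset γ)

def Egam (R : ℤ → Ω → ℕ) (γ : List ℤ × List ℤ) : Set Ω := Ev R γ.1 ∩ Ev R γ.2

def Bset (R : ℤ → Ω → ℕ) (j l : ℤ) (γ : List ℤ × List ℤ) : Set Ω :=
  ⋃ (δ : List ℤ × List ℤ) (_ : Wgood j l γ δ), Egam R δ

lemma ev_get (R : ℤ → Ω → ℕ) (ω : Ω) :
    ∀ (xs : List ℤ), ω ∈ Ev R xs → ∀ (a : ℤ), xs.head? = some a →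
      ∀ (s : ℕ) (hs : s < xs.length), (par R ω)^[s] a = xs.get ⟨s, hs⟩ := by
  intro xs
  induction xs with
  | nil => intro _ a _ s hs; simp at hs
  | cons b t ih =>
    intro hev a ha s hs
    have hab : b = a := by simpa using ha
    subst hab
    cases s with
    | zero => simp
    | succ s =>
      cases t with
      | nil => simp at hs
      | cons c t' =>
        rw [Ev, Set.mem_setOf_eq, List.Chain', List.isChain_cons_cons] at hev
        have hpar : par R ω b = c := by rw [par, hev.1]; ring
        have hrec := ih hev.2 c rfl s (by simpa using Nat.lt_of_succ_lt_succ hs)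
        calc (par R ω)^[s + 1] b = (par R ω)^[s] (par R ω b) :=
              Function.iterate_succ_apply _ _ _
          _ = (par R ω)^[s] c := by rw [hpar]
          _ = (c :: t').get ⟨s, by simpa using Nat.lt_of_succ_lt_succ hs⟩ := hrec
          _ = (b :: c :: t').get ⟨s + 1, hs⟩ := rfl

lemma ev_getLast (R : ℤ → Ω → ℕ) (ω : Ω) (xs : List ℤ) (hne : xs ≠ [])
    (hev : ω ∈ Ev R xs) (a : ℤ) (ha : xs.head? = some a) :
    xs.getLast? = some ((par R ω)^[xs.length - 1] a) := by
  have hlen : 0 < xs.length := List.length_pos_iff.mpr hne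
  rw [List.getLast?_eq_getLast_of_ne_nil hne, List.getLast_eq_getElem]
  exact congrArg some (ev_get R ω xs hev a ha _ (by omega)).symm

lemma egam_rel {R : ℤ → Ω → ℕ} {ω : Ω} {x y : ℤ} {δ : List ℤ × List ℤ}
    (hne1 : δ.1 ≠ []) (hne2 : δ.2 ≠ []) (hd1 : δ.1.head? = some x)
    (hd2 : δ.2.head? = some y) (hlast : δ.1.getLast? = δ.2.getLast?)
    (hE : ω ∈ Egam R δ) : rel R ω x y := by
  have h1 := ev_getLast R ω δ.1 hne1 hE.1 x hd1
  have h2 := ev_getLast R ω δ.2 hne2 hE.2 y hd2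
  rw [h1, h2] at hlast
  exact ⟨_, _, Option.some_injective _ hlast⟩

/-! ### Canonical lineage lists -/

def lin (R : ℤ → Ω → ℕ) (ω : Ω) (a : ℤ) (m : ℕ) : List ℤ :=
  (List.range (m + 1)).map (fun s => (par R ω)^[s] a)

lemma lin_length (R : ℤ → Ω → ℕ) (ω : Ω) (a : ℤ) (m : ℕ) :
    (lin R ω a m).length = m + 1 := by simp [lin]

lemma lin_ne (R : ℤ → Ω → ℕ) (ω : Ω) (a : ℤ) (m : ℕ) : lin R ω a m ≠ [] := by
  have := lin_length R ω a m
  intro h; rw [h] at this; simp at this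

lemma lin_head (R : ℤ → Ω → ℕ) (ω : Ω) (a : ℤ) (m : ℕ) :
    (lin R ω a m).head? = some a := by
  rw [lin, List.range_succ_eq_map]
  simp

lemma lin_last (R : ℤ → Ω → ℕ) (ω : Ω) (a : ℤ) (m : ℕ) :
    (lin R ω a m).getLast? = some ((par R ω)^[m] a) := by
  rw [lin, List.range_succ, List.map_append]
  simp

lemma lin_dropLast (R : ℤ → Ω → ℕ) (ω : Ω) (a : ℤ) (m : ℕ) :
    (lin R ω a m).dropLast = (List.range m).map (fun s => (par R ω)^[s] a) := by
  rw [lin, List.range_succ, List.map_append]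
  simp

lemma lin_mem_dropLast {R : ℤ → Ω → ℕ} {ω : Ω} {a v : ℤ} {m : ℕ} :
    v ∈ (lin R ω a m).dropLast ↔ ∃ s, s < m ∧ (par R ω)^[s] a = v := by
  rw [lin_dropLast]
  simp [List.mem_map, List.mem_range]
  tauto

lemma lin_ev (R : ℤ → Ω → ℕ) (ω : Ω) (a : ℤ) (m : ℕ) : ω ∈ Ev R (lin R ω a m) := by
  rw [Ev, Set.mem_setOf_eq, lin, List.Chain', List.isChain_map, List.isChain_range_succ]
  intro s _
  rw [Function.iterate_succ_apply', par]
  ring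

/-! ### Strict decrease on good environments -/

lemma par_lt {R : ℤ → Ω → ℕ} {ω : Ω} (hG : ω ∈ GoodEnv R) (x : ℤ) : par R ω x < x := by
  have h := hG x
  have : (1 : ℤ) ≤ (R x ω : ℤ) := by exact_mod_cast h
  rw [par]; omega

lemma iter_lt {R : ℤ → Ω → ℕ} {ω : Ω} (hG : ω ∈ GoodEnv R) (x : ℤ) :
    ∀ d : ℕ, 0 < d → (par R ω)^[d] x < x := by
  intro d hd
  induction d with
  | zero => omega
  | succ e ih =>
    rw [Function.iterate_succ_apply']
    rcases Nat.eq_zero_or_pos e with he | he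
    · subst he; simpa using par_lt hG x
    · exact lt_trans (par_lt hG _) (ih he)

lemma iter_inj {R : ℤ → Ω → ℕ} {ω : Ω} (hG : ω ∈ GoodEnv R) (x : ℤ) {s t : ℕ}
    (h : (par R ω)^[s] x = (par R ω)^[t] x) : s = t := by
  rcases lt_trichotomy s t with hst | hst | hst
  · exfalso
    have : (par R ω)^[t] x = (par R ω)^[t - s] ((par R ω)^[s] x) := by
      rw [← Function.iterate_add_apply]; congr 1; omega
    have hlt := iter_lt hG ((par R ω)^[s] x) (t - s) (by omega)
    rw [← this, ← h] at hlt
    exact lt_irrefl _ hlt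
  · exact hst
  · exfalso
    have : (par R ω)^[s] x = (par R ω)^[s - t] ((par R ω)^[t] x) := by
      rw [← Function.iterate_add_apply]; congr 1; omega
    have hlt := iter_lt hG ((par R ω)^[t] x) (s - t) (by omega)
    rw [← this, h] at hlt
    exact lt_irrefl _ hlt

lemma merge (p : ℤ → ℤ) (x y : ℤ) (m n : ℕ) (h : p^[m] x = p^[n] y) :
    ∀ t : ℕ, p^[m + t] x = p^[n + t] y := by
  intro t
  induction t with
  | zero => simpa using h
  | succ t ih =>
    have h1 : m + (t + 1) = (m + t) + 1 := by omega
    have h2 : n + (t + 1) = (n + t) + 1 := by omega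
    rw [h1, h2, Function.iterate_succ_apply', Function.iterate_succ_apply', ih]

/-! ### Canonical form of admissible witnesses -/

lemma adm_data {R : ℤ → Ω → ℕ} {ω : Ω} {i k : ℤ} {γ : List ℤ × List ℤ}
    (h : Adm i k γ) (hE : ω ∈ Egam R γ) :
    γ.1 = lin R ω i (γ.1.length - 1) ∧ γ.2 = lin R ω k (γ.2.length - 1) ∧
      (par R ω)^[γ.1.length - 1] i = (par R ω)^[γ.2.length - 1] k := by
  have hl1 : 0 < γ.1.length := List.length_pos_iff.mpr h.ne1
  have hl2 : 0 < γ.2.length := List.length_pos_iff.mpr h.ne2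
  have key : ∀ (xs : List ℤ) (a : ℤ), xs ≠ [] → xs.head? = some a → ω ∈ Ev R xs →
      xs = lin R ω a (xs.length - 1) := by
    intro xs a hne ha hev
    have hlen : 0 < xs.length := List.length_pos_iff.mpr hne
    apply List.ext_get
    · rw [lin_length]; omega
    · intro s h1 h2
      rw [← ev_get R ω xs hev a ha s h1,
        ← ev_get R ω (lin R ω a (xs.length - 1)) (lin_ev R ω a _) a (lin_head R ω a _) s h2]
  refine ⟨key γ.1 i h.ne1 h.hd1 hE.1, key γ.2 k h.ne2 h.hd2 hE.2, ?_⟩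
  have h1 := ev_getLast R ω γ.1 h.ne1 hE.1 i h.hd1
  have h2 := ev_getLast R ω γ.2 h.ne2 hE.2 k h.hd2
  have := h.hlast
  rw [h1, h2] at this
  exact Option.some_injective _ this

lemma adm_unique {R : ℤ → Ω → ℕ} {ω : Ω} {i k : ℤ} {γ γ' : List ℤ × List ℤ}
    (hG : ω ∈ GoodEnv R) (h : Adm i k γ) (h' : Adm i k γ')
    (hE : ω ∈ Egam R γ) (hE' : ω ∈ Egam R γ') : γ = γ' := by
  obtain ⟨hx, hy, hmn⟩ := adm_data h hE
  obtain ⟨hx', hy', hmn'⟩ := adm_data h' hE'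
  set p := par R ω
  set m := γ.1.length - 1
  set n := γ.2.length - 1
  set m' := γ'.1.length - 1
  set n' := γ'.2.length - 1
  -- helper: if m₀ < m₁ (with data) we get a contradiction
  have key : ∀ (m₀ n₀ m₁ n₁ : ℕ), p^[m₀] i = p^[n₀] k → p^[m₁] i = p^[n₁] k →
      (∀ v, v ∈ (lin R ω i m₁).dropLast → v ∉ (lin R ω k n₁).dropLast) →
      ¬ m₀ < m₁ := by
    intro m₀ n₀ m₁ n₁ e₀ e₁ hdisj hlt
    have hmer := merge p i k m₀ n₀ e₀ (m₁ - m₀)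
    have hm1 : m₀ + (m₁ - m₀) = m₁ := by omega
    rw [hm1] at hmer
    -- p^[m₁] i = p^[n₀ + (m₁ - m₀)] k  and  = p^[n₁] k
    have hn1 : n₁ = n₀ + (m₁ - m₀) := iter_inj hG k (by rw [← e₁, hmer])
    have hm₀mem : p^[m₀] i ∈ (lin R ω i m₁).dropLast :=
      lin_mem_dropLast.mpr ⟨m₀, hlt, rfl⟩
    have hn₀mem : p^[m₀] i ∈ (lin R ω k n₁).dropLast :=
      lin_mem_dropLast.mpr ⟨n₀, by omega, e₀.symm⟩
    exact hdisj _ hm₀mem hn₀mem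
  have hdisj' : ∀ v, v ∈ (lin R ω i m').dropLast → v ∉ (lin R ω k n').dropLast := by
    intro v hv; rw [← hx', ← hy'] at *; exact h'.disj v hv
  have hdisj0 : ∀ v, v ∈ (lin R ω i m).dropLast → v ∉ (lin R ω k n).dropLast := by
    intro v hv; rw [← hx, ← hy] at *; exact h.disj v hv
  have hmm : m = m' := by
    rcases lt_trichotomy m m' with hc | hc | hc
    · exact absurd hc (key m n m' n' hmn hmn' hdisj')
    · exact hc
    · exact absurd hc (key m' n' m n hmn' hmn hdisj0)
  have hnn : n = n' := by
    apply iter_inj hG k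
    rw [← hmn, ← hmn', hmm]
  have : γ.1 = γ'.1 := by rw [hx, hx', hmm]
  have h2 : γ.2 = γ'.2 := by rw [hy, hy', hnn]
  exact Prod.ext this h2



/-- Membership of a lineage point in `Fset` of the canonical witness implies relation to `k`. -/
lemma main_incl {R : ℤ → Ω → ℕ} {ω : Ω} {i j k l : ℤ}
    (h1 : rel R ω i k) (h2 : rel R ω j l) (h3 : ¬ rel R ω k j) :
    ∃ γ, Adm i k γ ∧ ω ∈ Egam R γ ∧ ω ∈ Bset R j l γ := by
  classical
  set p := par R ω with hp
  have hex : ∃ m, ∃ n, p^[m] i = p^[n] k := h1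
  set m := Nat.find hex with hm
  have hn : ∃ n, p^[m] i = p^[n] k := Nat.find_spec hex
  set n := Nat.find hn with hnn
  have hmn : p^[m] i = p^[n] k := Nat.find_spec hn
  refine ⟨(lin R ω i m, lin R ω k n), ?_, ⟨lin_ev R ω i m, lin_ev R ω k n⟩, ?_⟩
  · refine ⟨lin_ne R ω i m, lin_ne R ω k n, lin_head R ω i m, lin_head R ω k n, ?_, ?_⟩
    · rw [lin_last, lin_last, hmn]
    · intro v hv hv'
      obtain ⟨s, hs, hsv⟩ := lin_mem_dropLast.mp hv
      obtain ⟨t, _, htv⟩ := lin_mem_dropLast.mp hv'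
      exact Nat.find_min hex hs ⟨t, by rw [hsv, htv]⟩
  · -- every element of Fset is related to k
    have hFrel : ∀ v, v ∈ Fset (lin R ω i m, lin R ω k n) → rel R ω v k := by
      intro v hv
      rcases hv with hv | hv
      · obtain ⟨s, hs, hsv⟩ := lin_mem_dropLast.mp hv
        refine ⟨m - s, n, ?_⟩
        rw [← hsv, ← Function.iterate_add_apply]
        have : m - s + s = m := by omega
        rw [this, hmn]
      · obtain ⟨t, ht, htv⟩ := lin_mem_dropLast.mp hv
        refine ⟨n - t, n, ?_⟩
        rw [← htv, ← Function.iterate_add_apply]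
        congr 1
        omega
    obtain ⟨a, b, hab⟩ := h2
    rw [Bset, Set.mem_iUnion]
    refine ⟨(lin R ω j a, lin R ω l b), Set.mem_iUnion.mpr ⟨?_, lin_ev R ω j a, lin_ev R ω l b⟩⟩
    refine ⟨lin_ne R ω j a, lin_ne R ω l b, lin_head R ω j a, lin_head R ω l b, ?_, ?_, ?_⟩
    · rw [lin_last, lin_last, hab]
    · intro v hv hvF
      obtain ⟨s, _, hsv⟩ := lin_mem_dropLast.mp hv
      have hjv : rel R ω j v := ⟨s, 0, by simpa using hsv⟩
      exact h3 (rel_symm (rel_trans hjv (hFrel v hvF)))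
    · intro v hv hvF
      obtain ⟨s, _, hsv⟩ := lin_mem_dropLast.mp hv
      have hlv : rel R ω l v := ⟨s, 0, by simpa using hsv⟩
      exact h3 (rel_symm (rel_trans (rel_trans (⟨a, b, hab⟩ : rel R ω j l) hlv) (hFrel v hvF)))

/-! ### Measurability -/

lemma ev_mble (R : ℤ → Ω → ℕ) (S : Set ℤ) :
    ∀ (xs : List ℤ), (∀ v ∈ xs.dropLast, v ∈ S) →
      MeasurableSet[⨆ v ∈ S, MeasurableSpace.comap (R v) inferInstance] (Ev R xs) := by
  intro xs
  induction xs with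
  | nil =>
    intro _
    have : Ev R ([] : List ℤ) = Set.univ := by ext ω; simp [Ev, List.Chain']
    rw [this]; exact MeasurableSet.univ
  | cons b t ih =>
    intro h
    cases t with
    | nil =>
      have : Ev R ([b]) = Set.univ := by ext ω; simp [Ev, List.Chain']
      rw [this]; exact MeasurableSet.univ
    | cons c t' =>
      have hsplit : Ev R (b :: c :: t') =
          ((R b) ⁻¹' {r : ℕ | (r : ℤ) = b - c}) ∩ Ev R (c :: t') := by
        ext ω
        simp only [Ev, Set.mem_setOf_eq, List.Chain', List.isChain_cons_cons, Set.mem_inter_iff,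
          Set.mem_preimage]
      rw [hsplit]
      have hb : b ∈ S := h b (by simp)
      have h1 : MeasurableSet[MeasurableSpace.comap (R b) inferInstance]
          ((R b) ⁻¹' {r : ℕ | (r : ℤ) = b - c}) :=
        ⟨{r : ℕ | (r : ℤ) = b - c}, MeasurableSet.of_discrete, rfl⟩
      have hle : MeasurableSpace.comap (R b) (inferInstance : MeasurableSpace ℕ) ≤
          ⨆ v ∈ S, MeasurableSpace.comap (R v) inferInstance :=
        le_biSup (fun v => MeasurableSpace.comap (R v) inferInstance) hb
      refine MeasurableSet.inter (hle _ h1) (ih ?_)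
      intro v hv
      exact h v (by simp [hv])

lemma egam_mble (R : ℤ → Ω → ℕ) (γ : List ℤ × List ℤ) :
    MeasurableSet[⨆ v ∈ Fset γ, MeasurableSpace.comap (R v) inferInstance] (Egam R γ) :=
  MeasurableSet.inter (ev_mble R _ γ.1 fun v hv => Or.inl hv)
    (ev_mble R _ γ.2 fun v hv => Or.inr hv)

lemma bset_mble (R : ℤ → Ω → ℕ) (j l : ℤ) (γ : List ℤ × List ℤ) :
    MeasurableSet[⨆ v ∈ (Fset γ)ᶜ, MeasurableSpace.comap (R v) inferInstance]
      (Bset R j l γ) := by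
  refine MeasurableSet.iUnion fun δ => MeasurableSet.iUnion fun hδ => ?_
  exact MeasurableSet.inter (ev_mble R _ δ.1 hδ.2.2.2.2.2.1) (ev_mble R _ δ.2 hδ.2.2.2.2.2.2)

lemma ev_mble_amb {R : ℤ → Ω → ℕ} (hmeas : ∀ v, Measurable (R v)) (xs : List ℤ) :
    MeasurableSet (Ev R xs) := by
  have h := ev_mble R Set.univ xs (fun v _ => Set.mem_univ v)
  have hle : (⨆ v ∈ (Set.univ : Set ℤ), MeasurableSpace.comap (R v) inferInstance) ≤
      (inferInstance : MeasurableSpace Ω) :=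
    iSup₂_le fun v _ => (hmeas v).comap_le
  exact hle _ h

lemma goodEnv_mble {R : ℤ → Ω → ℕ} (hmeas : ∀ v, Measurable (R v)) :
    MeasurableSet (GoodEnv R) := by
  have : GoodEnv R = ⋂ v : ℤ, (R v) ⁻¹' {r : ℕ | 1 ≤ r} := by
    ext ω; simp [GoodEnv]
  rw [this]
  exact MeasurableSet.iInter fun v => (hmeas v) MeasurableSet.of_discrete


end HSaux

/-- For any probability measure `μ` on `ℕ = {1,2,…}` and the random equivalence relation `∼`
generated by the coalescing renewal processes, for pairwise distinct `i,j,k,ℓ ∈ ℤ`,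
`P(i ∼ k ≁ j ∼ ℓ) ≤ P(i ∼ k) P(j ∼ ℓ)` (the event being that `i ∼ k`, `j ∼ ℓ`, but the
component of `i,k` is distinct from the component of `j,ℓ`). -/
theorem coalescence_in_distinct_components_le
    {Ω : Type} [MeasurableSpace Ω] (P : Measure Ω) (μ : Measure ℕ)
    (R : ℤ → Ω → ℕ)
    (hP : IsProbabilityMeasure P) (hμprob : IsProbabilityMeasure μ) (hμ0 : μ {0} = 0)
    (hmeas : ∀ i, Measurable (R i))
    (hindep : iIndepFun R P)
    (hlaw : ∀ i, Measure.map (R i) P = μ)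
    (i j k l : ℤ)
    (hij : i ≠ j) (hik : i ≠ k) (hil : i ≠ l) (hjk : j ≠ k) (hjl : j ≠ l) (hkl : k ≠ l) :
    (P {ω | rel R ω i k ∧ rel R ω j l ∧ ¬ rel R ω k j}).toReal
      ≤ (P {ω | rel R ω i k}).toReal * (P {ω | rel R ω j l}).toReal := by
  classical
  open HSaux in
  have hGnull : P (GoodEnv R)ᶜ = 0 := by
    have hc : (GoodEnv R)ᶜ = ⋃ v : ℤ, (R v) ⁻¹' {0} := by
      ext ω
      simp only [GoodEnv, Set.mem_compl_iff, Set.mem_setOf_eq, not_forall, Set.mem_iUnion,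
        Set.mem_preimage, Set.mem_singleton_iff]
      constructor
      · rintro ⟨v, hv⟩; exact ⟨v, by omega⟩
      · rintro ⟨v, hv⟩; exact ⟨v, by omega⟩
    rw [hc]
    refine measure_iUnion_null fun v => ?_
    have hmap : Measure.map (R v) P {0} = P ((R v) ⁻¹' {0}) :=
      Measure.map_apply (hmeas v) (measurableSet_singleton 0)
    rw [← hmap, hlaw v, hμ0]
  set A := {ω | rel R ω i k} with hA
  set B := {ω | rel R ω j l} with hB
  have key : P {ω | rel R ω i k ∧ rel R ω j l ∧ ¬ rel R ω k j} ≤ P A * P B := by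
    have hsub : {ω | rel R ω i k ∧ rel R ω j l ∧ ¬ rel R ω k j} ⊆
        ⋃ γ : {γ : List ℤ × List ℤ // Adm i k γ}, (Egam R γ.1 ∩ Bset R j l γ.1) := by
      intro ω hω
      obtain ⟨γ, hadm, hE, hBω⟩ := main_incl hω.1 hω.2.1 hω.2.2
      exact Set.mem_iUnion.mpr ⟨⟨γ, hadm⟩, hE, hBω⟩
    have hind : ∀ γ : {γ : List ℤ × List ℤ // Adm i k γ},
        P (Egam R γ.1 ∩ Bset R j l γ.1) = P (Egam R γ.1) * P (Bset R j l γ.1) := by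
      intro γ
      have hI : Indep (⨆ v ∈ Fset γ.1, MeasurableSpace.comap (R v) inferInstance)
          (⨆ v ∈ (Fset γ.1)ᶜ, MeasurableSpace.comap (R v) inferInstance) P :=
        indep_biSup_compl (fun v => (hmeas v).comap_le) hindep.iIndep (Fset γ.1)
      exact (Indep_iff _ _ _).mp hI _ _ (egam_mble R γ.1) (bset_mble R j l γ.1)
    have hBsub : ∀ γ : {γ : List ℤ × List ℤ // Adm i k γ}, Bset R j l γ.1 ⊆ B := by
      intro γ ω hω
      rw [Bset, Set.mem_iUnion] at hω
      obtain ⟨δ, hδ⟩ := hω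
      rw [Set.mem_iUnion] at hδ
      obtain ⟨hw, hE⟩ := hδ
      exact egam_rel hw.1 hw.2.1 hw.2.2.1 hw.2.2.2.1 hw.2.2.2.2.1 hE
    have hEG : ∀ γ : {γ : List ℤ × List ℤ // Adm i k γ},
        P (Egam R γ.1) = P (Egam R γ.1 ∩ GoodEnv R) := by
      intro γ
      refine le_antisymm ?_ (measure_mono Set.inter_subset_left)
      calc P (Egam R γ.1) ≤ P ((Egam R γ.1 ∩ GoodEnv R) ∪ (GoodEnv R)ᶜ) := by
            refine measure_mono ?_
            intro ω h
            by_cases hg : ω ∈ GoodEnv R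
            · exact Or.inl ⟨h, hg⟩
            · exact Or.inr hg
        _ ≤ P (Egam R γ.1 ∩ GoodEnv R) + P (GoodEnv R)ᶜ := measure_union_le _ _
        _ = P (Egam R γ.1 ∩ GoodEnv R) := by rw [hGnull, add_zero]
    have hdisjU : Pairwise (Function.onFun Disjoint
        (fun γ : {γ : List ℤ × List ℤ // Adm i k γ} => Egam R γ.1 ∩ GoodEnv R)) := by
      intro γ γ' hne
      rw [Function.onFun, Set.disjoint_left]
      intro ω hω hω'
      exact hne (Subtype.ext (adm_unique hω.2 γ.2 γ'.2 hω.1 hω'.1))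
    have hmbleU : ∀ γ : {γ : List ℤ × List ℤ // Adm i k γ},
        MeasurableSet (Egam R γ.1 ∩ GoodEnv R) := fun γ =>
      ((ev_mble_amb hmeas _).inter (ev_mble_amb hmeas _)).inter (goodEnv_mble hmeas)
    have hUsub : (⋃ γ : {γ : List ℤ × List ℤ // Adm i k γ}, Egam R γ.1 ∩ GoodEnv R) ⊆ A := by
      intro ω hω
      obtain ⟨γ, hγ⟩ := Set.mem_iUnion.mp hω
      exact egam_rel γ.2.ne1 γ.2.ne2 γ.2.hd1 γ.2.hd2 γ.2.hlast hγ.1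
    have hsum : (∑' γ : {γ : List ℤ × List ℤ // Adm i k γ}, P (Egam R γ.1)) ≤ P A := by
      calc (∑' γ : {γ : List ℤ × List ℤ // Adm i k γ}, P (Egam R γ.1))
          = ∑' γ : {γ : List ℤ × List ℤ // Adm i k γ}, P (Egam R γ.1 ∩ GoodEnv R) :=
            tsum_congr hEG
        _ = P (⋃ γ : {γ : List ℤ × List ℤ // Adm i k γ}, Egam R γ.1 ∩ GoodEnv R) :=
            (measure_iUnion hdisjU hmbleU).symm
        _ ≤ P A := measure_mono hUsub
    calc P {ω | rel R ω i k ∧ rel R ω j l ∧ ¬ rel R ω k j}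
        ≤ P (⋃ γ : {γ : List ℤ × List ℤ // Adm i k γ}, (Egam R γ.1 ∩ Bset R j l γ.1)) :=
          measure_mono hsub
      _ ≤ ∑' γ : {γ : List ℤ × List ℤ // Adm i k γ}, P (Egam R γ.1 ∩ Bset R j l γ.1) :=
          measure_iUnion_le _
      _ = ∑' γ : {γ : List ℤ × List ℤ // Adm i k γ}, P (Egam R γ.1) * P (Bset R j l γ.1) :=
          tsum_congr hind
      _ ≤ ∑' γ : {γ : List ℤ × List ℤ // Adm i k γ}, P (Egam R γ.1) * P B :=
          ENNReal.tsum_le_tsum fun γ => mul_le_mul_right (measure_mono (hBsub γ)) _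
      _ = (∑' γ : {γ : List ℤ × List ℤ // Adm i k γ}, P (Egam R γ.1)) * P B :=
          ENNReal.tsum_mul_right
      _ ≤ P A * P B := mul_le_mul_left hsum _
  have hAB : P A * P B ≠ ⊤ := ENNReal.mul_ne_top (measure_ne_top _ _) (measure_ne_top _ _)
  have := ENNReal.toReal_mono hAB key
  rwa [ENNReal.toReal_mul] at this

end
end
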